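/- The family S_P := (S_{δ_V(P)})_{V} is a sub-presheaf of the spectral presheaf Σ: for every inclusion V' ⊆ V of abelian von Neumann subalgebras, the restriction of any λ ∈ S_{δ_V(P)} lies in S_{δ_{V'}(P)}, i.e. λ|_{V'} ∈ S_{δ_{V'}(P)}. -/
import Mathlib


open WeakDual

/-- An element of a star ring is a projection if it is a self-adjoint idempotent. -/
def IsProj' {C : Type*} [Ring C] [StarRing C] (p : C) : Prop :=
  p * p = p ∧ star p = p

/-- The order `p ≤ q` on projections: `p * q = p = q * p`. -/
def ProjLE {C : Type*} [Mul C] (p q : C) : Prop :=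
  p * q = p ∧ q * p = p

/-- `d` is the outer daseinisation of the projection `P` in the context `V`:
the smallest projection in `V` dominating `P`. -/
def IsDaseinisation {C : Type*} [Ring C] [StarRing C] (V : Set C) (P d : C) : Prop :=
  IsProj' d ∧ ProjLE P d ∧ ∀ q ∈ V, IsProj' q → ProjLE P q → ProjLE d q

/-- The family `(S_{δ_V(P)})_V` is a sub-presheaf of the spectral presheaf: the
restriction of any `λ ∈ S_{δ_V(P)}` lies in `S_{δ_{V'}(P)}`. -/
theorem stmt_13 {C : Type*} [NormedRing C] [NormedAlgebra ℂ C] [CompleteSpace C]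
    [StarRing C] [CStarRing C] [StarModule ℂ C]
    (V V' : StarSubalgebra ℂ C) (hVV' : V' ≤ V)
    (hVcomm : ∀ a ∈ V, ∀ b ∈ V, a * b = b * a)
    (r : characterSpace ℂ V → characterSpace ℂ V')
    (hr : ∀ (l : characterSpace ℂ V) (x : V'), r l x = l ⟨(x : C), hVV' x.2⟩)
    (P : C) (hPproj : IsProj' P)
    (dV dV' : C) (hdVmem : dV ∈ V) (hdV'mem : dV' ∈ V')
    (hdV : IsDaseinisation (V : Set C) P dV)
    (hdV' : IsDaseinisation (V' : Set C) P dV') :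
    ∀ l : characterSpace ℂ V, l ⟨dV, hdVmem⟩ = 1 → r l ⟨dV', hdV'mem⟩ = 1 := by
  intro l hl
  have hle : ProjLE dV dV' :=
    hdV.2.2 dV' (hVV' hdV'mem) hdV'.1 hdV'.2.1
  have hprod : (⟨dV, hdVmem⟩ : V) * ⟨dV', hVV' hdV'mem⟩ = ⟨dV, hdVmem⟩ := by
    ext
    exact hle.1
  have h2 := congrArg l hprod
  rw [map_mul, hl, one_mul] at h2
  rw [hr l ⟨dV', hdV'mem⟩]
  exact h2
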